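/- arXiv:1705.06837 — 2 statements merged into one kernel-verified Lean document; each statement's English description precedes it below -/
import Mathlib

section
/- Let ρ₁ > ρ₀ > 0 and γ > 1, with c₀² = ρ₀^{γ-1}, c₁² = ρ₁^{γ-1}. Define ξ₁ = sqrt(2ρ₁²(c₁² - c₀²)/((γ-1)(ρ₁² - ρ₀²))) and u₁ = ((ρ₁-ρ₀)/ρ₁)ξ₁. Then 0 < ξ₁ - u₁ < c₁, i.e., the incident shock is pseudo-subsonic relative to the left state. -/
open Real

lemma key_s (γ : ℝ) (hγ : 1 < γ) {s : ℝ} (hs0 : 0 < s) (hs1 : s < 1) :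
    0 < 2 * s ^ (γ + 1) - (γ + 1) * s ^ 2 + (γ - 1) := by
  set f : ℝ → ℝ := fun x => 2 * x ^ (γ + 1) - (γ + 1) * x ^ 2 + (γ - 1) with hf
  have hp : (1:ℝ) ≤ γ + 1 := by linarith
  have hd : ∀ x : ℝ, HasDerivAt f (2 * ((γ + 1) * x ^ γ) - (γ + 1) * (2 * x)) x := by
    intro x
    have h1 : HasDerivAt (fun x : ℝ => x ^ (γ + 1)) ((γ + 1) * x ^ (γ + 1 - 1)) x :=
      Real.hasDerivAt_rpow_const (Or.inr hp)
    have h1' : HasDerivAt (fun x : ℝ => x ^ (γ + 1)) ((γ + 1) * x ^ γ) x := by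
      simpa using h1
    have h2 : HasDerivAt (fun x : ℝ => x ^ 2) (2 * x) x := by
      simpa using hasDerivAt_pow 2 x
    have := ((h1'.const_mul 2).sub (h2.const_mul (γ + 1))).add_const (γ - 1)
    simpa [hf] using this
  have hanti : StrictAntiOn f (Set.Icc 0 1) := by
    apply strictAntiOn_of_deriv_neg (convex_Icc 0 1)
    · exact (Differentiable.continuous fun x => (hd x).differentiableAt).continuousOn
    · intro x hx
      rw [interior_Icc] at hx
      rw [(hd x).deriv]
      have hlt : x ^ γ < x ^ (1:ℝ) :=
        Real.rpow_lt_rpow_of_exponent_gt hx.1 hx.2 hγ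
      rw [Real.rpow_one] at hlt
      nlinarith [hx.1]
  have h10 : f 1 = 0 := by simp [hf]; ring
  have := hanti (Set.mem_Icc.mpr ⟨hs0.le, hs1.le⟩) (Set.mem_Icc.mpr ⟨zero_le_one, le_refl 1⟩) hs1
  rw [h10] at this
  simpa [hf] using this

lemma key_ρ (ρ₀ ρ₁ γ : ℝ) (hρ₀ : 0 < ρ₀) (hρ : ρ₀ < ρ₁) (hγ : 1 < γ) :
    2 * ρ₀ ^ 2 * (ρ₁ ^ (γ - 1) - ρ₀ ^ (γ - 1)) < (γ - 1) * (ρ₁ ^ 2 - ρ₀ ^ 2) * ρ₁ ^ (γ - 1) := by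
  have hρ₁ : 0 < ρ₁ := hρ₀.trans hρ
  set s := ρ₀ / ρ₁ with hs
  have hs0 : 0 < s := div_pos hρ₀ hρ₁
  have hs1 : s < 1 := (div_lt_one hρ₁).mpr hρ
  have hk := key_s γ hγ hs0 hs1
  have hmul : 0 < (2 * s ^ (γ + 1) - (γ + 1) * s ^ 2 + (γ - 1)) * ρ₁ ^ (γ + 1) := by
    exact mul_pos hk (Real.rpow_pos_of_pos hρ₁ _)
  have e1 : s ^ (γ + 1) * ρ₁ ^ (γ + 1) = ρ₀ ^ (γ + 1) := by
    rw [hs, Real.div_rpow hρ₀.le hρ₁.le]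
    field_simp
  have e2 : s ^ 2 * ρ₁ ^ (γ + 1) = ρ₀ ^ 2 * ρ₁ ^ (γ - 1) := by
    have : ρ₁ ^ (γ + 1) = ρ₁ ^ (γ - 1) * ρ₁ ^ 2 := by
      rw [← Real.rpow_natCast ρ₁ 2, ← Real.rpow_add hρ₁]
      congr 1; ring
    rw [hs, div_pow, this]
    field_simp
  have e3 : ρ₀ ^ (γ + 1) = ρ₀ ^ 2 * ρ₀ ^ (γ - 1) := by
    rw [← Real.rpow_natCast ρ₀ 2, ← Real.rpow_add hρ₀]
    congr 1; ring
  have e4 : ρ₁ ^ (γ + 1) = ρ₁ ^ 2 * ρ₁ ^ (γ - 1) := by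
    rw [← Real.rpow_natCast ρ₁ 2, ← Real.rpow_add hρ₁]
    congr 1; ring
  nlinarith [hmul, e1, e2, e3, e4]

theorem stmt_5 (ρ₀ ρ₁ γ : ℝ) (hρ₀ : 0 < ρ₀) (hρ : ρ₀ < ρ₁) (hγ : 1 < γ)
    (c₀sq c₁sq ξ₁ u₁ c₁ : ℝ)
    (hc₀ : c₀sq = ρ₀ ^ (γ - 1)) (hc₁ : c₁sq = ρ₁ ^ (γ - 1))
    (hc₁pos : 0 < c₁) (hc₁sq : c₁ ^ 2 = c₁sq)
    (hξ₁ : ξ₁ = Real.sqrt (2 * ρ₁ ^ 2 * (c₁sq - c₀sq) / ((γ - 1) * (ρ₁ ^ 2 - ρ₀ ^ 2))))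
    (hu₁ : u₁ = (ρ₁ - ρ₀) / ρ₁ * ξ₁) :
    0 < ξ₁ - u₁ ∧ ξ₁ - u₁ < c₁ := by
  have hρ₁ : 0 < ρ₁ := hρ₀.trans hρ
  have hcs : c₀sq < c₁sq := by
    rw [hc₀, hc₁]
    exact Real.rpow_lt_rpow hρ₀.le hρ (by linarith)
  have hden : 0 < (γ - 1) * (ρ₁ ^ 2 - ρ₀ ^ 2) := mul_pos (by linarith) (by nlinarith)
  have hA : 0 < 2 * ρ₁ ^ 2 * (c₁sq - c₀sq) / ((γ - 1) * (ρ₁ ^ 2 - ρ₀ ^ 2)) := by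
    exact div_pos (mul_pos (by positivity) (by linarith)) hden
  have hξpos : 0 < ξ₁ := by rw [hξ₁]; exact Real.sqrt_pos.mpr hA
  have hdiff : ξ₁ - u₁ = ρ₀ / ρ₁ * ξ₁ := by
    rw [hu₁]; field_simp; ring
  have hξsq : ξ₁ ^ 2 = 2 * ρ₁ ^ 2 * (c₁sq - c₀sq) / ((γ - 1) * (ρ₁ ^ 2 - ρ₀ ^ 2)) := by
    rw [hξ₁, Real.sq_sqrt hA.le]
  constructor
  · rw [hdiff]; positivity
  · rw [hdiff]
    have hkey := key_ρ ρ₀ ρ₁ γ hρ₀ hρ hγ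
    rw [← hc₀, ← hc₁] at hkey
    have hsq : (ρ₀ / ρ₁ * ξ₁) ^ 2 < c₁ ^ 2 := by
      rw [mul_pow, div_pow, hξsq, hc₁sq]
      rw [div_mul_div_comm, div_lt_iff₀ (by positivity)]
      have : ρ₀ ^ 2 * (2 * ρ₁ ^ 2 * (c₁sq - c₀sq)) = ρ₁ ^ 2 * (2 * ρ₀ ^ 2 * (c₁sq - c₀sq)) := by ring
      nlinarith [mul_lt_mul_of_pos_left hkey (by positivity : (0:ℝ) < ρ₁ ^ 2)]
    have h1 : 0 < ρ₀ / ρ₁ * ξ₁ := by positivity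
    nlinarith [hsq, h1, hc₁pos]
end

section
/- Under the assumptions of the previous identity, with additionally a_{θθ} ≥ λ (from ellipticity with y = (0,1)), for every λ > 0 there exist L₀ ≥ 1 depending only on λ such that for all L ≥ L₀ there is α̂ > 0 with: for all |α| ≤ α̂, r > 0, and θ ∈ [-π, π], (μLe^{-Lθ}(-a_{θθ}L + 2a_{rθ}(α-1)) + α((α-1)a_{rr} + a_{θθ})h̄(θ)) r^{α-2} ≤ -(μL²/(2C))e^{-Lθ} r^{α-2} < 0, where C depends only on λ. -/
set_option maxHeartbeats 2000000 in
theorem stmt_11 (lam : ℝ) (hlam : 0 < lam) :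
    ∃ C > (0 : ℝ), ∃ L₀ ≥ (1 : ℝ), ∀ L ≥ L₀, ∃ αh > (0 : ℝ),
      ∀ arr arθ aθθ : ℝ,
        (∀ y₁ y₂ : ℝ, lam * (y₁ ^ 2 + y₂ ^ 2)
            ≤ arr * y₁ ^ 2 + 2 * arθ * y₁ * y₂ + aθθ * y₂ ^ 2) →
        |arr| ≤ 1 / lam → |arθ| ≤ 1 / lam → |aθθ| ≤ 1 / lam → lam ≤ aθθ →
        ∀ α : ℝ, |α| ≤ αh → ∀ r : ℝ, 0 < r → ∀ θ ∈ Set.Icc (-Real.pi) Real.pi,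
          ((1 / 2) * Real.exp (-Real.pi * L) * L * Real.exp (-L * θ)
              * (-aθθ * L + 2 * arθ * (α - 1))
            + α * ((α - 1) * arr + aθθ)
              * (1 - (1 / 2) * Real.exp (-Real.pi * L) * Real.exp (-L * θ))) * r ^ (α - 2)
          ≤ -((1 / 2) * Real.exp (-Real.pi * L) * L ^ 2 / (2 * C)) * Real.exp (-L * θ)
              * r ^ (α - 2)
          ∧ -((1 / 2) * Real.exp (-Real.pi * L) * L ^ 2 / (2 * C)) * Real.exp (-L * θ)
              * r ^ (α - 2) < 0 := by
  refine ⟨2 / lam, by positivity, max 1 (8 / lam ^ 2), le_max_left _ _, ?_⟩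
  intro L hL
  have hL1 : (1 : ℝ) ≤ L := le_trans (le_max_left _ _) hL
  have hLpos : (0 : ℝ) < L := lt_of_lt_of_le one_pos hL1
  have hL8 : 8 / lam ^ 2 ≤ L := le_trans (le_max_right _ _) hL
  refine ⟨min 1 (lam ^ 2 * L ^ 2 * Real.exp (-(2 * Real.pi) * L) / 32),
    lt_min one_pos (by positivity), ?_⟩
  intro arr arθ aθθ hell harr harθ haθθ hlow α hα r hr θ hθ
  obtain ⟨hθ1, hθ2⟩ := hθ
  have hα1 : |α| ≤ 1 := le_trans hα (min_le_left _ _)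
  have hα2 : |α| ≤ lam ^ 2 * L ^ 2 * Real.exp (-(2 * Real.pi) * L) / 32 :=
    le_trans hα (min_le_right _ _)
  set B : ℝ := (1 / 2) * Real.exp (-Real.pi * L) * Real.exp (-L * θ) with hBdef
  have hBpos : 0 < B := by positivity
  have hB2 : B ≤ 1 / 2 := by
    have h1 : Real.exp (-Real.pi * L) * Real.exp (-L * θ) = Real.exp (-Real.pi * L + -L * θ) :=
      (Real.exp_add _ _).symm
    have h2 : Real.exp (-Real.pi * L + -L * θ) ≤ 1 := by
      rw [Real.exp_le_one_iff]
      nlinarith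
    rw [hBdef, mul_assoc, h1]
    linarith
  have hBlow : (1 / 2) * Real.exp (-(2 * Real.pi) * L) ≤ B := by
    have h1 : Real.exp (-Real.pi * L) * Real.exp (-L * θ) = Real.exp (-Real.pi * L + -L * θ) :=
      (Real.exp_add _ _).symm
    have h2 : Real.exp (-(2 * Real.pi) * L) ≤ Real.exp (-Real.pi * L + -L * θ) := by
      apply Real.exp_le_exp.mpr
      nlinarith
    rw [hBdef, mul_assoc, h1]
    linarith
  -- key bracket inequality
  have harθ' := abs_le.mp harθ
  have harr' := abs_le.mp harr
  have hα1' := abs_le.mp hα1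
  have hα12 : |α - 1| ≤ 2 := abs_le.mpr ⟨by linarith [hα1'.1], by linarith [hα1'.2]⟩
  have h1 : -aθθ * L + 2 * arθ * (α - 1) ≤ -lam * L / 2 := by
    have ha : 2 * arθ * (α - 1) ≤ 4 / lam := by
      calc 2 * arθ * (α - 1) ≤ |2 * arθ * (α - 1)| := le_abs_self _
        _ = 2 * (|arθ| * |α - 1|) := by rw [abs_mul, abs_mul, abs_two]; ring
        _ ≤ 2 * ((1 / lam) * 2) := by
            have := mul_le_mul harθ hα12 (abs_nonneg _)
              (le_of_lt (by positivity : (0:ℝ) < 1 / lam))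
            linarith
        _ = 4 / lam := by ring
    have hb : -aθθ * L ≤ -lam * L := by nlinarith
    have h8 : 8 ≤ lam ^ 2 * L := by
      rw [div_le_iff₀ (by positivity)] at hL8; linarith
    have hc : 4 / lam ≤ lam * L / 2 := by
      rw [div_le_div_iff₀ hlam (by norm_num : (0:ℝ) < 2)]
      nlinarith
    linarith
  have hterm1 : B * L * (-aθθ * L + 2 * arθ * (α - 1)) ≤ -(B * lam * L ^ 2 / 2) := by
    calc B * L * (-aθθ * L + 2 * arθ * (α - 1))
        ≤ B * L * (-lam * L / 2) :=
          mul_le_mul_of_nonneg_left h1 (le_of_lt (mul_pos hBpos hLpos))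
      _ = -(B * lam * L ^ 2 / 2) := by ring
  have hterm2 : α * ((α - 1) * arr + aθθ) * (1 - B) ≤ B * lam * L ^ 2 / 4 := by
    have hmid : |(α - 1) * arr + aθθ| ≤ 3 / lam := by
      have h3 : |(α - 1) * arr| ≤ 2 / lam := by
        rw [abs_mul]
        calc |α - 1| * |arr| ≤ 2 * (1 / lam) :=
              mul_le_mul hα12 harr (abs_nonneg _) (by norm_num)
          _ = 2 / lam := by ring
      calc |(α - 1) * arr + aθθ| ≤ |(α - 1) * arr| + |aθθ| := abs_add_le _ _
        _ ≤ 2 / lam + 1 / lam := add_le_add h3 haθθ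
        _ = 3 / lam := by ring
    have h1B : 0 ≤ 1 - B := by linarith
    have h1B' : 1 - B ≤ 1 := by linarith
    have hbound : α * ((α - 1) * arr + aθθ) * (1 - B) ≤ |α| * (3 / lam) := by
      calc α * ((α - 1) * arr + aθθ) * (1 - B)
          ≤ |α * ((α - 1) * arr + aθθ) * (1 - B)| := le_abs_self _
        _ = |α| * |(α - 1) * arr + aθθ| * |1 - B| := by rw [abs_mul, abs_mul]
        _ ≤ |α| * (3 / lam) * 1 := by
            apply mul_le_mul
            · exact mul_le_mul_of_nonneg_left hmid (abs_nonneg _)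
            · rw [abs_of_nonneg h1B]; exact h1B'
            · exact abs_nonneg _
            · positivity
        _ = |α| * (3 / lam) := by ring
    have hkey : |α| * (3 / lam) ≤ B * lam * L ^ 2 / 4 := by
      have hE := Real.exp_pos (-(2 * Real.pi) * L)
      have s1 : |α| * (3 / lam)
          ≤ (3 / 32) * (lam * L ^ 2 * Real.exp (-(2 * Real.pi) * L)) := by
        calc |α| * (3 / lam)
            ≤ (lam ^ 2 * L ^ 2 * Real.exp (-(2 * Real.pi) * L) / 32) * (3 / lam) :=
              mul_le_mul_of_nonneg_right hα2 (by positivity)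
          _ = (3 / 32) * (lam * L ^ 2 * Real.exp (-(2 * Real.pi) * L)) := by
              field_simp
      have s2 : (3 / 32) * (lam * L ^ 2 * Real.exp (-(2 * Real.pi) * L))
          ≤ B * lam * L ^ 2 / 4 := by
        have h := mul_le_mul_of_nonneg_right hBlow
          (by positivity : (0:ℝ) ≤ lam * L ^ 2)
        nlinarith [mul_nonneg (mul_nonneg hlam.le (sq_nonneg L)) hE.le]
      linarith
    linarith
  have hC : (1 : ℝ) / 2 * Real.exp (-Real.pi * L) * L ^ 2 / (2 * (2 / lam)) * Real.exp (-L * θ)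
      = B * lam * L ^ 2 / 4 := by
    rw [hBdef]; field_simp; ring
  have hbracket : (1 / 2) * Real.exp (-Real.pi * L) * L * Real.exp (-L * θ)
        * (-aθθ * L + 2 * arθ * (α - 1))
      + α * ((α - 1) * arr + aθθ)
        * (1 - (1 / 2) * Real.exp (-Real.pi * L) * Real.exp (-L * θ))
      ≤ -((1 / 2) * Real.exp (-Real.pi * L) * L ^ 2 / (2 * (2 / lam))) * Real.exp (-L * θ) := by
    have e1 : (1 / 2) * Real.exp (-Real.pi * L) * L * Real.exp (-L * θ)
        * (-aθθ * L + 2 * arθ * (α - 1)) = B * L * (-aθθ * L + 2 * arθ * (α - 1)) := by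
      rw [hBdef]; ring
    have e3 : -((1 / 2) * Real.exp (-Real.pi * L) * L ^ 2 / (2 * (2 / lam)))
        * Real.exp (-L * θ) = -(B * lam * L ^ 2 / 4) := by
      rw [hBdef]; field_simp; ring
    rw [e1, ← hBdef, e3]
    linarith
  have hrp : (0 : ℝ) < r ^ (α - 2) := Real.rpow_pos_of_pos hr _
  constructor
  · calc ((1 / 2) * Real.exp (-Real.pi * L) * L * Real.exp (-L * θ)
          * (-aθθ * L + 2 * arθ * (α - 1))
        + α * ((α - 1) * arr + aθθ)
          * (1 - (1 / 2) * Real.exp (-Real.pi * L) * Real.exp (-L * θ))) * r ^ (α - 2)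
        ≤ (-((1 / 2) * Real.exp (-Real.pi * L) * L ^ 2 / (2 * (2 / lam)))
            * Real.exp (-L * θ)) * r ^ (α - 2) :=
          mul_le_mul_of_nonneg_right hbracket hrp.le
      _ = -((1 / 2) * Real.exp (-Real.pi * L) * L ^ 2 / (2 * (2 / lam))) * Real.exp (-L * θ)
            * r ^ (α - 2) := by ring
  · have hpos : 0 < (1 / 2) * Real.exp (-Real.pi * L) * L ^ 2 / (2 * (2 / lam))
        * Real.exp (-L * θ) * r ^ (α - 2) := by positivity
    linarith
end
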